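/- Let A be a commutative ring and F, G two formal group laws over A whose truncations modulo degree m agree, i.e. F ≡ G mod (T₁,T₂)^m for some m ≥ 2. Then the difference of their degree-m truncations, F − G taken modulo (T₁,T₂)^{m+1}, is a homogeneous symmetric polynomial 2-cocycle of degree m: writing P(T₁,T₂) for the degree-m homogeneous part of F − G, P is symmetric and satisfies P(T₂,T₃) − P(T₁+T₂,T₃) + P(T₁,T₂+T₃) − P(T₁,T₂) = 0. -/

import Mathlib

noncomputable section

variable {A : Type*} [CommRing A]

/-- Substitution of a family of (multivariate) power series into a multivariate power
series, defined coefficientwise via truncation.  It computes the honest substitution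
whenever each `a s` has zero constant coefficient. -/
def psubst {σ τ : Type*} [Fintype σ] [DecidableEq σ] (F : MvPowerSeries σ A)
    (a : σ → MvPowerSeries τ A) : MvPowerSeries τ A :=
  fun e => MvPowerSeries.coeff e
    (MvPolynomial.eval₂ (MvPowerSeries.C : A →+* MvPowerSeries τ A) a
      (MvPowerSeries.trunc A
        (Finsupp.equivFunOnFinite.symm fun _ => (e.sum fun _ k => k) + 1) F))

/-- `subst2 F f g` is `F(f, g)`. -/
def subst2 {τ : Type*} (F : MvPowerSeries (Fin 2) A) (f g : MvPowerSeries τ A) :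
    MvPowerSeries τ A :=
  psubst F ![f, g]

/-- `subst1 f G` is `f(G)`, substitution of a multivariate power series into a
one-variable power series. -/
def subst1 {τ : Type*} (f : PowerSeries A) (G : MvPowerSeries τ A) : MvPowerSeries τ A :=
  psubst f (fun _ => G)

/-- A (commutative, one-dimensional) formal group law over `A`. -/
structure IsFormalGroupLaw (F : MvPowerSeries (Fin 2) A) : Prop where
  id_left : subst2 F PowerSeries.X 0 = (PowerSeries.X : PowerSeries A)
  id_right : subst2 F 0 PowerSeries.X = (PowerSeries.X : PowerSeries A)
  assoc : subst2 F (subst2 F (MvPowerSeries.X 0) (MvPowerSeries.X 1))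
        (MvPowerSeries.X (2 : Fin 3))
      = subst2 F (MvPowerSeries.X 0) (subst2 F (MvPowerSeries.X 1) (MvPowerSeries.X 2))
  comm : subst2 F (MvPowerSeries.X 1) (MvPowerSeries.X (0 : Fin 2)) = F

/-- The `m`-series `[m]_F` of a formal group law: `[1]_F = T`, `[m+1]_F = F([m]_F, T)`. -/
def mulSeries (F : MvPowerSeries (Fin 2) A) : ℕ → PowerSeries A
  | 0 => 0
  | 1 => PowerSeries.X
  | (n+2) => subst2 F (mulSeries F (n+1)) PowerSeries.X

/-- The defect `∂f = f ∘ F − G ∘ (f × f)` measuring the failure of `f` to be a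
homomorphism of formal group laws `F → G`. -/
def fglDelta (F G : MvPowerSeries (Fin 2) A) (f : PowerSeries A) :
    MvPowerSeries (Fin 2) A :=
  subst1 f F - subst2 G (subst1 f (MvPowerSeries.X 0)) (subst1 f (MvPowerSeries.X 1))

/-- `f` is a homomorphism of formal group laws `F → G`. -/
def IsFGLHom (F G : MvPowerSeries (Fin 2) A) (f : PowerSeries A) : Prop :=
  PowerSeries.constantCoeff f = 0 ∧ fglDelta F G f = 0

/-- Lazard's polynomial `B_m = (T₁+T₂)^m − T₁^m − T₂^m`. -/
def Bpoly (A : Type*) [CommRing A] (m : ℕ) : MvPolynomial (Fin 2) A :=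
  (MvPolynomial.X 0 + MvPolynomial.X 1) ^ m - MvPolynomial.X 0 ^ m - MvPolynomial.X 1 ^ m

/-- `λ(m)`: the prime `ℓ` if `m` is a power of `ℓ`, and `1` otherwise. -/
def lambdaFun (m : ℕ) : ℕ := if IsPrimePow m then m.minFac else 1

/-- Lazard's polynomial `C_m = B_m / λ(m)`. -/
def Cpoly (A : Type*) [CommRing A] (m : ℕ) : MvPolynomial (Fin 2) A :=
  ∑ i ∈ Finset.Ioo 0 m, MvPolynomial.monomial
    (Finsupp.single 0 i + Finsupp.single 1 (m - i)) ((m.choose i / lambdaFun m : ℕ) : A)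

/-- The degree-`m` homogeneous part of a two-variable power series, as a polynomial. -/
def degPart (m : ℕ) (Φ : MvPowerSeries (Fin 2) A) : MvPolynomial (Fin 2) A :=
  ∑ i ∈ Finset.range (m + 1), MvPolynomial.monomial
    (Finsupp.single 0 i + Finsupp.single 1 (m - i))
    (MvPowerSeries.coeff (Finsupp.single 0 i + Finsupp.single 1 (m - i)) Φ)

/-- The symmetric 2-cocycle condition for a two-variable polynomial. -/
def IsSymmCocycle (P : MvPolynomial (Fin 2) A) : Prop :=
  MvPolynomial.rename (Equiv.swap (0 : Fin 2) 1) P = P ∧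
  MvPolynomial.aeval ![(MvPolynomial.X 1 : MvPolynomial (Fin 3) A), MvPolynomial.X 2] P
    - MvPolynomial.aeval ![(MvPolynomial.X 0 + MvPolynomial.X 1 : MvPolynomial (Fin 3) A),
        MvPolynomial.X 2] P
    + MvPolynomial.aeval ![(MvPolynomial.X 0 : MvPolynomial (Fin 3) A),
        MvPolynomial.X 1 + MvPolynomial.X 2] P
    - MvPolynomial.aeval ![(MvPolynomial.X 0 : MvPolynomial (Fin 3) A), MvPolynomial.X 1] P = 0


set_option linter.unusedSectionVars false

section Aux
variable {τ : Type*}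

abbrev dg (e : τ →₀ ℕ) : ℕ := e.sum fun _ k => k

lemma dg_eq_degree (e : τ →₀ ℕ) : dg e = e.degree := rfl

lemma dg_add (a b : τ →₀ ℕ) : dg (a + b) = dg a + dg b :=
  Finsupp.sum_add_index' (fun _ => rfl) (fun _ _ _ => rfl)

lemma le_dg (s : τ) (e : τ →₀ ℕ) : e s ≤ dg e := by
  rw [dg_eq_degree]; exact Finsupp.le_degree s e

lemma dg_single (s : τ) (n : ℕ) : dg (Finsupp.single s n) = n :=
  Finsupp.sum_single_index rfl

lemma dg_eq_zero {e : τ →₀ ℕ} (h : dg e = 0) : e = 0 := by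
  rw [dg_eq_degree] at h; exact (Finsupp.degree_eq_zero_iff e).mp h

def ordGe (f : MvPowerSeries τ A) (k : ℕ) : Prop :=
  ∀ e : τ →₀ ℕ, dg e < k → MvPowerSeries.coeff e f = 0

lemma ordGe_zero (k : ℕ) : ordGe (0 : MvPowerSeries τ A) k := fun _ _ => map_zero _

lemma ordGe_triv (f : MvPowerSeries τ A) : ordGe f 0 := fun _ he => absurd he (by omega)

lemma ordGe.mono {f : MvPowerSeries τ A} {j k : ℕ} (h : ordGe f k) (hjk : j ≤ k) :
    ordGe f j := fun e he => h e (lt_of_lt_of_le he hjk)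

lemma ordGe.add {f g : MvPowerSeries τ A} {k : ℕ} (hf : ordGe f k) (hg : ordGe g k) :
    ordGe (f + g) k := fun e he => by
  rw [map_add, hf e he, hg e he, add_zero]

lemma ordGe.neg {f : MvPowerSeries τ A} {k : ℕ} (hf : ordGe f k) : ordGe (-f) k :=
  fun e he => by rw [map_neg, hf e he, neg_zero]

lemma ordGe.sub {f g : MvPowerSeries τ A} {k : ℕ} (hf : ordGe f k) (hg : ordGe g k) :
    ordGe (f - g) k := by rw [sub_eq_add_neg]; exact hf.add hg.neg

lemma ordGe.mul {f g : MvPowerSeries τ A} {j k : ℕ} (hf : ordGe f j) (hg : ordGe g k) :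
    ordGe (f * g) (j + k) := by
  classical
  intro e he
  rw [MvPowerSeries.coeff_mul]
  apply Finset.sum_eq_zero
  rintro ⟨u, v⟩ huv
  rw [Finset.HasAntidiagonal.mem_antidiagonal] at huv
  have hd : dg u + dg v < j + k := by rw [← dg_add, huv]; exact he
  rcases lt_or_ge (dg u) j with h | h
  · rw [hf u h, zero_mul]
  · rw [hg v (by omega), mul_zero]

lemma ordGe.pow {f : MvPowerSeries τ A} {k : ℕ} (hf : ordGe f k) (n : ℕ) :
    ordGe (f ^ n) (n * k) := by
  induction n with
  | zero => intro e he; simp at he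
  | succ n ih =>
    rw [pow_succ, Nat.succ_mul]
    exact ih.mul hf

lemma ordGe_one_of_constantCoeff {f : MvPowerSeries τ A}
    (h : MvPowerSeries.coeff (0 : τ →₀ ℕ) f = 0) : ordGe f 1 := by
  intro e he
  have : e = 0 := dg_eq_zero (by omega)
  subst this
  exact h

lemma ordGe_X [DecidableEq τ] (s : τ) : ordGe (MvPowerSeries.X s : MvPowerSeries τ A) 1 :=
  ordGe_one_of_constantCoeff (by
    rw [MvPowerSeries.coeff_zero_eq_constantCoeff]
    exact MvPowerSeries.constantCoeff_X s)

lemma ordGe_prod {ι : Type*} (t : Finset ι) (f : ι → MvPowerSeries τ A) (k : ι → ℕ)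
    (h : ∀ i ∈ t, ordGe (f i) (k i)) : ordGe (∏ i ∈ t, f i) (∑ i ∈ t, k i) := by
  classical
  induction t using Finset.induction with
  | empty => simpa [ordGe] using fun e (he : dg e < 0) => absurd he (by omega)
  | insert _ _ hnot ih =>
    rename_i a t'
    rw [Finset.prod_insert hnot, Finset.sum_insert hnot]
    exact (h a (Finset.mem_insert_self a t')).mul
      (ih fun i hi => h i (Finset.mem_insert_of_mem hi))

lemma ordGe_prod_pow {σ : Type*} [Fintype σ] (a : σ → MvPowerSeries τ A)
    (ha : ∀ s, ordGe (a s) 1) (d : σ →₀ ℕ) :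
    ordGe (∏ s : σ, (a s) ^ (d s)) (dg d) := by
  have h1 : dg d = ∑ s : σ, d s * 1 := by
    simp only [mul_one]
    exact Finsupp.sum_fintype _ _ (fun _ => rfl)
  rw [h1]
  exact ordGe_prod _ _ _ (fun s _ => (ha s).pow (d s))

lemma ordGe_pow_sub_pow {a b : MvPowerSeries τ A} {m : ℕ}
    (hab : ordGe (a - b) m) (hb : ordGe b 1) (n : ℕ) :
    ordGe (a ^ n - b ^ n) m := by
  induction n with
  | zero => simpa using ordGe_zero m
  | succ n ih =>
    have h : a ^ (n+1) - b ^ (n+1) = a ^ n * (a - b) + (a ^ n - b ^ n) * b := by ring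
    rw [h]
    refine ordGe.add ?_ ?_
    · exact ((ordGe_triv (a ^ n)).mul hab).mono (by omega)
    · exact (ih.mul hb).mono (by omega)

lemma ordGe_pow_sub_pow' {a b : MvPowerSeries τ A}
    (ha : ordGe a 1) (hb : ordGe b 1) (hab : ordGe (a - b) 2) (n : ℕ) :
    ordGe (a ^ n - b ^ n) (n + 1) := by
  induction n with
  | zero => simpa using ordGe_zero 1
  | succ n ih =>
    have h : a ^ (n+1) - b ^ (n+1) = a ^ n * (a - b) + (a ^ n - b ^ n) * b := by ring
    rw [h]
    refine ordGe.add ?_ ?_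
    · exact ((ha.pow n).mul hab).mono (by omega)
    · exact (ih.mul hb).mono (by omega)

lemma ordGe_prodpow_sub {σ : Type*} [Fintype σ] {a b : σ → MvPowerSeries τ A}
    (ha : ∀ s, ordGe (a s) 1) (hb : ∀ s, ordGe (b s) 1)
    (hab : ∀ s, ordGe (a s - b s) 2) (d : σ →₀ ℕ) :
    ordGe (∏ s : σ, (a s) ^ (d s) - ∏ s : σ, (b s) ^ (d s)) (dg d + 1) := by
  classical
  have key : ∀ t : Finset σ,
      ordGe (∏ s ∈ t, (a s) ^ (d s) - ∏ s ∈ t, (b s) ^ (d s)) ((∑ s ∈ t, d s) + 1) := by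
    intro t
    induction t using Finset.induction with
    | empty => simpa using ordGe_zero 1
    | insert _ _ hnot ih =>
      rename_i s t'
      rw [Finset.prod_insert hnot, Finset.prod_insert hnot, Finset.sum_insert hnot]
      have h : a s ^ d s * ∏ x ∈ t', a x ^ d x - b s ^ d s * ∏ x ∈ t', b x ^ d x
          = a s ^ d s * (∏ x ∈ t', a x ^ d x - ∏ x ∈ t', b x ^ d x)
            + (a s ^ d s - b s ^ d s) * ∏ x ∈ t', b x ^ d x := by ring
      rw [h]
      refine ordGe.add ?_ ?_
      · exact (((ha s).pow (d s)).mul ih).mono (by omega)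
      · have h1 := ordGe_pow_sub_pow' (ha s) (hb s) (hab s) (d s)
        have h2 : ordGe (∏ x ∈ t', b x ^ d x) (∑ x ∈ t', d x * 1) :=
          ordGe_prod _ _ _ (fun x _ => (hb x).pow (d x))
        have := h1.mul h2
        refine this.mono ?_
        simp only [mul_one]
        omega
  have hd : dg d = ∑ s : σ, d s := Finsupp.sum_fintype _ _ (fun _ => rfl)
  rw [hd]
  exact key Finset.univ

end Aux

section Psubst

abbrev bnd (σ : Type*) [Fintype σ] (N : ℕ) : σ →₀ ℕ :=
  Finsupp.equivFunOnFinite.symm fun _ => N + 1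

lemma bnd_apply {σ : Type*} [Fintype σ] (N : ℕ) (s : σ) : bnd σ N s = N + 1 := rfl

lemma mem_Iio_bnd {σ : Type*} [Fintype σ] [DecidableEq σ] {N : ℕ} {d : σ →₀ ℕ}
    (h1 : ∀ s, d s ≤ N + 1) (h2 : ∃ s, d s ≤ N) : d ∈ Finset.Iio (bnd σ N) := by
  rw [Finset.mem_Iio, lt_iff_le_and_ne]
  constructor
  · rw [Finsupp.le_def]
    intro s; rw [bnd_apply]; exact h1 s
  · intro hEq
    obtain ⟨s, hs⟩ := h2
    have h3 : d s = N + 1 := by rw [hEq, bnd_apply]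
    omega

lemma coeff_psubst {σ τ : Type*} [Fintype σ] [DecidableEq σ] (F : MvPowerSeries σ A)
    (a : σ → MvPowerSeries τ A) (e : τ →₀ ℕ) :
    MvPowerSeries.coeff e (psubst F a) =
      ∑ d ∈ Finset.Iio (bnd σ (dg e)), MvPowerSeries.coeff d F *
        MvPowerSeries.coeff e (∏ s : σ, (a s) ^ (d s)) := by
  classical
  have htr : (MvPowerSeries.trunc A (bnd σ (dg e)) F) =
      ∑ d ∈ Finset.Iio (bnd σ (dg e)), MvPolynomial.monomial d (MvPowerSeries.coeff d F) := by
    have h : MvPowerSeries.trunc A (bnd σ (dg e)) F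
        = MvPowerSeries.truncFinset A (Finset.Iio (bnd σ (dg e))) F := rfl
    rw [h, MvPowerSeries.truncFinset_apply]
  have hps : MvPowerSeries.coeff e (psubst F a)
      = MvPowerSeries.coeff e (MvPolynomial.eval₂ ((MvPowerSeries.C : A →+* MvPowerSeries τ A)) a
          (MvPowerSeries.trunc A (bnd σ (dg e)) F)) := by
    rw [MvPowerSeries.coeff_apply, psubst]
  rw [hps, htr]
  rw [MvPolynomial.eval₂_sum (s := Finset.Iio (bnd σ (dg e)))
      (p := fun d => MvPolynomial.monomial d (MvPowerSeries.coeff d F))]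
  rw [map_sum (MvPowerSeries.coeff e) _ (Finset.Iio (bnd σ (dg e)))]
  refine Finset.sum_congr rfl fun d _ => ?_
  rw [MvPolynomial.eval₂_monomial, MvPowerSeries.coeff_C_mul]
  have hpr : (d.prod fun s n => a s ^ n) = ∏ s : σ, a s ^ d s :=
    Finsupp.prod_fintype _ _ (fun s => pow_zero _)
  rw [hpr]

lemma psubst_sub {σ τ : Type*} [Fintype σ] [DecidableEq σ] (F G : MvPowerSeries σ A)
    (a : σ → MvPowerSeries τ A) :
    psubst (F - G) a = psubst F a - psubst G a := by
  ext e
  rw [map_sub, coeff_psubst, coeff_psubst, coeff_psubst, ← Finset.sum_sub_distrib]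
  exact Finset.sum_congr rfl fun d _ => by rw [map_sub, sub_mul]

lemma ordGe_psubst {σ τ : Type*} [Fintype σ] [DecidableEq σ] {F : MvPowerSeries σ A}
    {a : σ → MvPowerSeries τ A} {m : ℕ}
    (hF : ordGe F m) (ha : ∀ s, ordGe (a s) 1) :
    ordGe (psubst F a) m := by
  intro e he
  rw [coeff_psubst]
  apply Finset.sum_eq_zero
  intro d _
  rcases lt_or_ge (dg d) m with h | h
  · rw [hF d h, zero_mul]
  · rw [ordGe_prod_pow a ha d e (by omega), mul_zero]

/-- every exponent on `Fin 2` decomposes -/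
lemma fin2_ext (d : Fin 2 →₀ ℕ) : d = Finsupp.single 0 (d 0) + Finsupp.single 1 (d 1) := by
  ext s
  fin_cases s <;> simp [Finsupp.single_apply]

lemma dg_fin2 (d : Fin 2 →₀ ℕ) : dg d = d 0 + d 1 := by
  have h : dg d = ∑ s : Fin 2, d s := Finsupp.sum_fintype _ _ (fun _ => rfl)
  rw [h, Fin.sum_univ_two]

end Psubst

section L1L2
variable {τ : Type*}

/-- L1: substituting arguments that agree up to degree 1 into a series of order ≥ m -/
lemma coeff_psubst_congr_args {Φ : MvPowerSeries (Fin 2) A} {m : ℕ} (hΦ : ordGe Φ m)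
    {a b : Fin 2 → MvPowerSeries τ A} (ha : ∀ s, ordGe (a s) 1) (hb : ∀ s, ordGe (b s) 1)
    (hab : ∀ s, ordGe (a s - b s) 2) {e : τ →₀ ℕ} (he : dg e ≤ m) :
    MvPowerSeries.coeff e (psubst Φ a) = MvPowerSeries.coeff e (psubst Φ b) := by
  rw [coeff_psubst, coeff_psubst]
  refine Finset.sum_congr rfl fun d _ => ?_
  rcases lt_or_ge (dg d) m with h | h
  · rw [hΦ d h, zero_mul, zero_mul]
  · congr 1
    have hdiff := ordGe_prodpow_sub ha hb hab d
    have h0 : MvPowerSeries.coeff e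
        (∏ s : Fin 2, a s ^ d s - ∏ s : Fin 2, b s ^ d s) = 0 :=
      hdiff e (by omega)
    rw [map_sub] at h0
    exact sub_eq_zero.mp h0

lemma prod_two_eq (f g : MvPowerSeries τ A) (d : Fin 2 →₀ ℕ) :
    (∏ s : Fin 2, (![f, g] s) ^ (d s)) = f ^ (d 0) * g ^ (d 1) := by
  rw [Fin.prod_univ_two]
  simp

/-- L2 (left version) -/
lemma key_L2_left {H : MvPowerSeries (Fin 2) A}
    (hu : ∀ i, MvPowerSeries.coeff (Finsupp.single 0 i) H = if i = 1 then 1 else 0)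
    {S S' U : MvPowerSeries τ A} (_hS : ordGe S 1) (hS' : ordGe S' 1) (hU : ordGe U 1)
    {m : ℕ} (hSS' : ordGe (S - S') m) {e : τ →₀ ℕ} (he : dg e ≤ m) :
    MvPowerSeries.coeff e (psubst H ![S, U]) - MvPowerSeries.coeff e (psubst H ![S', U])
      = MvPowerSeries.coeff e (S - S') := by
  rw [coeff_psubst, coeff_psubst, ← Finset.sum_sub_distrib]
  rw [Finset.sum_eq_single (Finsupp.single 0 1)]
  · rw [prod_two_eq, prod_two_eq]
    have h0 : (Finsupp.single (0 : Fin 2) 1) 0 = 1 := by simp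
    have h1 : (Finsupp.single (0 : Fin 2) 1) 1 = 0 := by simp
    rw [h0, h1, hu 1, if_pos rfl, pow_one, pow_one, pow_zero, mul_one, mul_one,
      one_mul, one_mul, map_sub]
  · intro d _ hd
    rw [prod_two_eq, prod_two_eq]
    by_cases hd1 : d 1 = 0
    · have hdec : d = Finsupp.single 0 (d 0) := by
        have h := fin2_ext d
        rwa [hd1, Finsupp.single_zero, add_zero] at h
      have hd0 : d 0 ≠ 1 := by
        intro h
        exact hd (by rw [hdec, h])
      rw [hdec, hu (d 0), if_neg hd0, zero_mul, zero_mul, sub_zero]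
    · by_cases hd0 : d 0 = 0
      · rw [hd0, pow_zero, pow_zero, sub_self]
      · have h1 : ordGe (S ^ d 0 - S' ^ d 0) m := ordGe_pow_sub_pow hSS' hS' (d 0)
        have h2 : ordGe ((S ^ d 0 - S' ^ d 0) * U ^ (d 1)) (m + d 1 * 1) :=
          h1.mul (hU.pow (d 1))
        have h3 : MvPowerSeries.coeff e ((S ^ d 0 - S' ^ d 0) * U ^ (d 1)) = 0 :=
          h2 e (by omega)
        rw [sub_mul, map_sub] at h3
        rw [sub_eq_zero.mp h3, sub_self]
  · intro hmem
    exfalso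
    refine hmem (mem_Iio_bnd ?_ ?_)
    · intro s
      fin_cases s <;> simp
    · exact ⟨1, by simp⟩

/-- L2 (right version) -/
lemma key_L2_right {H : MvPowerSeries (Fin 2) A}
    (hv : ∀ j, MvPowerSeries.coeff (Finsupp.single 1 j) H = if j = 1 then 1 else 0)
    {S S' U : MvPowerSeries τ A} (_hS : ordGe S 1) (hS' : ordGe S' 1) (hU : ordGe U 1)
    {m : ℕ} (hSS' : ordGe (S - S') m) {e : τ →₀ ℕ} (he : dg e ≤ m) :
    MvPowerSeries.coeff e (psubst H ![U, S]) - MvPowerSeries.coeff e (psubst H ![U, S'])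
      = MvPowerSeries.coeff e (S - S') := by
  rw [coeff_psubst, coeff_psubst, ← Finset.sum_sub_distrib]
  rw [Finset.sum_eq_single (Finsupp.single 1 1)]
  · rw [prod_two_eq, prod_two_eq]
    have h0 : (Finsupp.single (1 : Fin 2) 1) 0 = 0 := by simp
    have h1 : (Finsupp.single (1 : Fin 2) 1) 1 = 1 := by simp
    rw [h0, h1, hv 1, if_pos rfl]
    simp only [pow_one, pow_zero, one_mul]
    rw [map_sub]
  · intro d _ hd
    rw [prod_two_eq, prod_two_eq]
    by_cases hd0 : d 0 = 0
    · have hdec : d = Finsupp.single 1 (d 1) := by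
        have h := fin2_ext d
        rwa [hd0, Finsupp.single_zero, zero_add] at h
      have hd1 : d 1 ≠ 1 := by
        intro h
        exact hd (by rw [hdec, h])
      rw [hdec, hv (d 1), if_neg hd1, zero_mul, zero_mul, sub_zero]
    · by_cases hd1 : d 1 = 0
      · rw [hd1]
        simp
      · have h1 : ordGe (S ^ d 1 - S' ^ d 1) m := ordGe_pow_sub_pow hSS' hS' (d 1)
        have h2 : ordGe (U ^ (d 0) * (S ^ d 1 - S' ^ d 1)) (d 0 * 1 + m) :=
          (hU.pow (d 0)).mul h1
        have h3 : MvPowerSeries.coeff e (U ^ (d 0) * (S ^ d 1 - S' ^ d 1)) = 0 :=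
          h2 e (by omega)
        rw [mul_sub, map_sub] at h3
        rw [sub_eq_zero.mp h3, sub_self]
  · intro hmem
    exfalso
    refine hmem (mem_Iio_bnd ?_ ?_)
    · intro s
      fin_cases s <;> simp
    · exact ⟨0, by simp⟩

end L1L2

section XX
variable {τ : Type*} [DecidableEq τ]

lemma prod_XX_eq (i j : τ) (d : Fin 2 →₀ ℕ) :
    (∏ s : Fin 2, ((![MvPowerSeries.X i, MvPowerSeries.X j] : Fin 2 → MvPowerSeries τ A) s)
      ^ (d s)) = MvPowerSeries.monomial (Finsupp.single i (d 0) + Finsupp.single j (d 1)) 1 := by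
  rw [prod_two_eq, MvPowerSeries.X_pow_eq, MvPowerSeries.X_pow_eq,
    MvPowerSeries.monomial_mul_monomial, one_mul]

lemma coeff_psubst_XX (F : MvPowerSeries (Fin 2) A) {i j : τ} (hij : i ≠ j) (e : τ →₀ ℕ) :
    MvPowerSeries.coeff e (psubst F ![MvPowerSeries.X i, MvPowerSeries.X j]) =
      if e = Finsupp.single i (e i) + Finsupp.single j (e j) then
        MvPowerSeries.coeff (Finsupp.single 0 (e i) + Finsupp.single 1 (e j)) F else 0 := by
  rw [coeff_psubst]
  rw [Finset.sum_eq_single (Finsupp.single 0 (e i) + Finsupp.single 1 (e j))]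
  · rw [prod_XX_eq, MvPowerSeries.coeff_monomial]
    have h0 : ((Finsupp.single 0 (e i) + Finsupp.single 1 (e j) : Fin 2 →₀ ℕ)) 0 = e i := by
      simp [Finsupp.single_apply]
    have h1 : ((Finsupp.single 0 (e i) + Finsupp.single 1 (e j) : Fin 2 →₀ ℕ)) 1 = e j := by
      simp [Finsupp.single_apply]
    rw [h0, h1]
    split_ifs with h
    · rw [mul_one]
    · rw [mul_zero]
  · intro d _ hd
    rw [prod_XX_eq, MvPowerSeries.coeff_monomial]
    have hne : e ≠ Finsupp.single i (d 0) + Finsupp.single j (d 1) := by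
      intro h
      apply hd
      have hei : e i = d 0 := by
        rw [h]; simp [Finsupp.single_apply, hij, Ne.symm hij]
      have hej : e j = d 1 := by
        rw [h]; simp [Finsupp.single_apply, hij, Ne.symm hij]
      rw [hei, hej]
      exact fin2_ext d
    rw [if_neg hne, mul_zero]
  · intro hmem
    exfalso
    refine hmem (mem_Iio_bnd ?_ ?_)
    · intro s
      fin_cases s <;>
        simp [Finsupp.single_apply] <;> exact le_trans (le_dg _ e) (by omega)
    · refine ⟨0, ?_⟩
      simp [Finsupp.single_apply]
      exact le_dg i e

/-- linear part of a 2-variable series with unital rows/columns, substituted with X's -/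
lemma lin_part {H : MvPowerSeries (Fin 2) A}
    (hu : ∀ i', MvPowerSeries.coeff (Finsupp.single 0 i') H = if i' = 1 then 1 else 0)
    (hv : ∀ j', MvPowerSeries.coeff (Finsupp.single 1 j') H = if j' = 1 then 1 else 0)
    {i j : τ} (hij : i ≠ j) :
    ordGe (psubst H ![MvPowerSeries.X i, MvPowerSeries.X j]
      - (MvPowerSeries.X i + MvPowerSeries.X j)) 2 := by
  intro e he
  rw [map_sub, map_add, coeff_psubst_XX _ hij,
    MvPowerSeries.coeff_X, MvPowerSeries.coeff_X]
  by_cases hcond : e = Finsupp.single i (e i) + Finsupp.single j (e j)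
  · rw [if_pos hcond]
    have hdg : e i + e j ≤ 1 := by
      have h1 := congrArg dg hcond
      rw [dg_add, dg_single, dg_single] at h1
      omega
    rcases Nat.lt_or_ge (e i) 1 with h0 | h0
    · rcases Nat.lt_or_ge (e j) 1 with h1 | h1
      · -- e i = 0, e j = 0, e = 0
        have hei : e i = 0 := by omega
        have hej : e j = 0 := by omega
        have he0 : e = 0 := by
          rw [hcond, hei, hej]; simp
        rw [hei, hej]
        have hH0 := hu 0
        rw [Finsupp.single_zero] at hH0
        simp only [Finsupp.single_zero, add_zero, zero_add, hH0]
        have hn1 : e ≠ Finsupp.single i 1 := by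
          rw [he0]; intro h; have := DFunLike.congr_fun h i; simp at this
        have hn2 : e ≠ Finsupp.single j 1 := by
          rw [he0]; intro h; have := DFunLike.congr_fun h j; simp at this
        rw [if_neg (by norm_num), if_neg hn1, if_neg hn2]
        ring
      · -- e i = 0, e j = 1
        have hei : e i = 0 := by omega
        have hej : e j = 1 := by omega
        have heq : e = Finsupp.single j 1 := by
          rw [hcond, hei, hej]; simp
        rw [hei, hej]
        simp only [Finsupp.single_zero, zero_add]
        rw [hv 1, if_pos rfl]
        have hn1 : e ≠ Finsupp.single i 1 := by
          rw [heq]; intro h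
          have := DFunLike.congr_fun h j
          simp [Finsupp.single_apply, hij, Ne.symm hij] at this
        rw [if_neg hn1, if_pos heq]
        ring
    · -- e i = 1, e j = 0
      have hei : e i = 1 := by omega
      have hej : e j = 0 := by omega
      have heq : e = Finsupp.single i 1 := by
        rw [hcond, hei, hej]; simp
      rw [hei, hej]
      simp only [Finsupp.single_zero, add_zero]
      rw [hu 1, if_pos rfl]
      have hn2 : e ≠ Finsupp.single j 1 := by
        rw [heq]; intro h
        have := DFunLike.congr_fun h i
        simp [Finsupp.single_apply, hij, Ne.symm hij] at this
      rw [if_neg hn2, if_pos heq]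
      ring
  · rw [if_neg hcond]
    have hn1 : e ≠ Finsupp.single i 1 := by
      intro h
      apply hcond
      rw [h]
      simp [Finsupp.single_apply, hij, Ne.symm hij]
    have hn2 : e ≠ Finsupp.single j 1 := by
      intro h
      apply hcond
      rw [h]
      simp [Finsupp.single_apply, hij, Ne.symm hij]
    rw [if_neg hn1, if_neg hn2]
    ring

lemma ordGe_psubst_XX_one {H : MvPowerSeries (Fin 2) A}
    (hu : ∀ i', MvPowerSeries.coeff (Finsupp.single 0 i') H = if i' = 1 then 1 else 0)
    (hv : ∀ j', MvPowerSeries.coeff (Finsupp.single 1 j') H = if j' = 1 then 1 else 0)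
    {i j : τ} (hij : i ≠ j) :
    ordGe (psubst H ![MvPowerSeries.X i, MvPowerSeries.X j]) 1 := by
  have h : psubst H ![MvPowerSeries.X i, MvPowerSeries.X j]
      = (psubst H ![MvPowerSeries.X i, MvPowerSeries.X j]
          - (MvPowerSeries.X i + MvPowerSeries.X j))
        + (MvPowerSeries.X i + MvPowerSeries.X j) := by ring
  rw [h]
  exact ((lin_part hu hv hij).mono (by omega)).add ((ordGe_X i).add (ordGe_X j))

end XX

section Extract

lemma single_unit_eq_iff (i n : ℕ) :
    (Finsupp.single () i = Finsupp.single (() : Unit) n) ↔ i = n := by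
  constructor
  · intro hh
    have := DFunLike.congr_fun hh ()
    simpa using this
  · rintro rfl; rfl

lemma hu_extract {H : MvPowerSeries (Fin 2) A}
    (h : psubst H ![(MvPowerSeries.X () : MvPowerSeries Unit A), 0] = MvPowerSeries.X ()) :
    ∀ i, MvPowerSeries.coeff (Finsupp.single 0 i) H = if i = 1 then 1 else 0 := by
  intro i
  have hc := congrArg (MvPowerSeries.coeff (Finsupp.single () i)) h
  rw [coeff_psubst] at hc
  rw [Finset.sum_eq_single (Finsupp.single 0 i)] at hc
  · rw [prod_two_eq] at hc
    have h0 : (Finsupp.single (0 : Fin 2) i) 0 = i := by simp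
    have h1 : (Finsupp.single (0 : Fin 2) i) 1 = 0 := by simp
    rw [h0, h1, pow_zero, mul_one, MvPowerSeries.coeff_X_pow, if_pos rfl, mul_one,
      MvPowerSeries.coeff_X] at hc
    rw [hc]; simp only [single_unit_eq_iff]
  · intro d _ hd
    rw [prod_two_eq]
    by_cases hd1 : d 1 = 0
    · have hdec : d = Finsupp.single 0 (d 0) := by
        have hh := fin2_ext d
        rwa [hd1, Finsupp.single_zero, add_zero] at hh
      have hd0 : d 0 ≠ i := by
        intro hh
        exact hd (by rw [hdec, hh])
      rw [hd1, pow_zero, mul_one, MvPowerSeries.coeff_X_pow,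
        if_neg (by rw [single_unit_eq_iff]; omega), mul_zero]
    · rw [zero_pow hd1, mul_zero, map_zero, mul_zero]
  · intro hmem
    exfalso
    refine hmem (mem_Iio_bnd ?_ ?_)
    · intro s
      have hdg : dg (Finsupp.single (() : Unit) i) = i := dg_single _ _
      fin_cases s <;> simp [hdg]
    · refine ⟨1, by simp⟩

lemma hv_extract {H : MvPowerSeries (Fin 2) A}
    (h : psubst H ![(0 : MvPowerSeries Unit A), MvPowerSeries.X ()] = MvPowerSeries.X ()) :
    ∀ j, MvPowerSeries.coeff (Finsupp.single 1 j) H = if j = 1 then 1 else 0 := by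
  intro i
  have hc := congrArg (MvPowerSeries.coeff (Finsupp.single () i)) h
  rw [coeff_psubst] at hc
  rw [Finset.sum_eq_single (Finsupp.single 1 i)] at hc
  · rw [prod_two_eq] at hc
    have h0 : (Finsupp.single (1 : Fin 2) i) 0 = 0 := by simp
    have h1 : (Finsupp.single (1 : Fin 2) i) 1 = i := by simp
    rw [h0, h1, pow_zero, one_mul, MvPowerSeries.coeff_X_pow, if_pos rfl, mul_one,
      MvPowerSeries.coeff_X] at hc
    rw [hc]; simp only [single_unit_eq_iff]
  · intro d _ hd
    rw [prod_two_eq]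
    by_cases hd0 : d 0 = 0
    · have hdec : d = Finsupp.single 1 (d 1) := by
        have hh := fin2_ext d
        rwa [hd0, Finsupp.single_zero, zero_add] at hh
      have hd1 : d 1 ≠ i := by
        intro hh
        exact hd (by rw [hdec, hh])
      rw [hd0, pow_zero, one_mul, MvPowerSeries.coeff_X_pow,
        if_neg (by rw [single_unit_eq_iff]; omega), mul_zero]
    · rw [zero_pow hd0, zero_mul, map_zero, mul_zero]
  · intro hmem
    exfalso
    refine hmem (mem_Iio_bnd ?_ ?_)
    · intro s
      have hdg : dg (Finsupp.single (() : Unit) i) = i := dg_single _ _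
      fin_cases s <;> simp [hdg]
    · refine ⟨0, by simp⟩

lemma coeff_comm_extract {F : MvPowerSeries (Fin 2) A}
    (hc : psubst F ![MvPowerSeries.X 1, MvPowerSeries.X (0 : Fin 2)] = F) (d : Fin 2 →₀ ℕ) :
    MvPowerSeries.coeff (Finsupp.single 0 (d 1) + Finsupp.single 1 (d 0)) F
      = MvPowerSeries.coeff d F := by
  have h := congrArg (MvPowerSeries.coeff d) hc
  rw [coeff_psubst_XX F (show (1 : Fin 2) ≠ 0 by decide) d] at h
  rw [if_pos (by rw [add_comm]; exact fin2_ext d)] at h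
  exact h

end Extract

section L3

lemma tdeg_X_le (i : Fin 3) : (MvPolynomial.X i : MvPolynomial (Fin 3) A).totalDegree ≤ 1 := by
  have h : (MvPolynomial.X i : MvPolynomial (Fin 3) A)
      = MvPolynomial.monomial (Finsupp.single i 1) 1 := rfl
  rw [h]
  refine le_trans (MvPolynomial.totalDegree_monomial_le _ _) ?_
  exact le_of_eq (Finsupp.sum_single_index rfl)

lemma coeff_prodpow_coe (a' : Fin 2 → MvPolynomial (Fin 3) A) (d : Fin 2 →₀ ℕ)
    (e : Fin 3 →₀ ℕ) :
    MvPolynomial.coeff e (∏ i ∈ d.support, a' i ^ d i)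
      = MvPowerSeries.coeff e (∏ s : Fin 2, ((a' s : MvPowerSeries (Fin 3) A)) ^ d s) := by
  have h1 : (∏ i ∈ d.support, a' i ^ d i) = ∏ s : Fin 2, a' s ^ d s := by
    refine Finset.prod_subset (Finset.subset_univ _) ?_
    intro s _ hs
    rw [Finsupp.notMem_support_iff.mp hs, pow_zero]
  have h2 : ((∏ s : Fin 2, a' s ^ d s : MvPolynomial (Fin 3) A) : MvPowerSeries (Fin 3) A)
      = ∏ s : Fin 2, ((a' s : MvPowerSeries (Fin 3) A)) ^ d s := by
    rw [← MvPolynomial.coeToMvPowerSeries.ringHom_apply, map_prod]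
    refine Finset.prod_congr rfl fun s _ => ?_
    rw [map_pow, MvPolynomial.coeToMvPowerSeries.ringHom_apply]
  rw [h1, ← MvPolynomial.coeff_coe, h2]

lemma coeff_aeval_expand {P : MvPolynomial (Fin 2) A} (a' : Fin 2 → MvPolynomial (Fin 3) A)
    (e : Fin 3 →₀ ℕ) :
    MvPolynomial.coeff e (MvPolynomial.aeval a' P)
      = ∑ d ∈ P.support, MvPolynomial.coeff d P *
          MvPowerSeries.coeff e (∏ s : Fin 2, ((a' s : MvPowerSeries (Fin 3) A)) ^ d s) := by
  rw [MvPolynomial.aeval_def, MvPolynomial.algebraMap_eq, MvPolynomial.eval₂_eq,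
    MvPolynomial.coeff_sum]
  refine Finset.sum_congr rfl fun d _ => ?_
  rw [MvPolynomial.coeff_C_mul, coeff_prodpow_coe]

lemma coeff_psubst_eq_aeval {Δ : MvPowerSeries (Fin 2) A} {m : ℕ} (hΔ : ordGe Δ m)
    {P : MvPolynomial (Fin 2) A}
    (hP : ∀ d, MvPolynomial.coeff d P = if dg d = m then MvPowerSeries.coeff d Δ else 0)
    (a' : Fin 2 → MvPolynomial (Fin 3) A)
    (ha1 : ∀ s, ordGe ((a' s : MvPowerSeries (Fin 3) A)) 1)
    {e : Fin 3 →₀ ℕ} (he : dg e ≤ m) :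
    MvPowerSeries.coeff e (psubst Δ (fun s => ((a' s : MvPowerSeries (Fin 3) A))))
      = MvPolynomial.coeff e (MvPolynomial.aeval a' P) := by
  have hsupdeg : ∀ d ∈ P.support, dg d = m := by
    intro d hd
    by_contra hne
    have h := hP d
    rw [if_neg hne] at h
    exact (MvPolynomial.mem_support_iff.mp hd) h
  rw [coeff_aeval_expand]
  rcases Nat.lt_or_ge (dg e) m with hlt | hge
  · rw [ordGe_psubst hΔ ha1 e hlt]
    symm
    apply Finset.sum_eq_zero
    intro d hd
    rw [ordGe_prod_pow _ ha1 d e (by have := hsupdeg d hd; omega), mul_zero]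
  · have hem : dg e = m := le_antisymm he hge
    rw [coeff_psubst]
    have hsub : P.support ⊆ Finset.Iio (bnd (Fin 2) (dg e)) := by
      intro d hd
      have hdm : dg d = m := hsupdeg d hd
      refine mem_Iio_bnd (fun s => ?_) ⟨0, ?_⟩
      · have := le_dg s d; omega
      · have := le_dg 0 d; omega
    rw [Finset.sum_subset hsub (fun d _ hd => by
      rw [MvPolynomial.notMem_support_iff.mp hd, zero_mul])]
    refine Finset.sum_congr rfl fun d _ => ?_
    rw [hP d]
    split_ifs with hdm
    · rfl
    · rcases Nat.lt_or_ge (dg d) m with h | h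
      · rw [hΔ d h]
      · rw [ordGe_prod_pow _ ha1 d e (by omega)]
        ring

lemma coeff_aeval_high {m : ℕ} {P : MvPolynomial (Fin 2) A}
    (hsupdeg : ∀ d ∈ P.support, dg d = m) (a' : Fin 2 → MvPolynomial (Fin 3) A)
    (ha2 : ∀ s, (a' s).totalDegree ≤ 1) {e : Fin 3 →₀ ℕ} (he : m < dg e) :
    MvPolynomial.coeff e (MvPolynomial.aeval a' P) = 0 := by
  rw [MvPolynomial.aeval_def, MvPolynomial.algebraMap_eq, MvPolynomial.eval₂_eq,
    MvPolynomial.coeff_sum]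
  apply Finset.sum_eq_zero
  intro d hd
  rw [MvPolynomial.coeff_C_mul]
  have htd : (∏ i ∈ d.support, a' i ^ d i).totalDegree ≤ m := by
    refine le_trans (MvPolynomial.totalDegree_finset_prod _ _) ?_
    have hbound : ∀ i ∈ d.support, (a' i ^ d i).totalDegree ≤ d i := fun i _ =>
      le_trans (MvPolynomial.totalDegree_pow _ _)
        (by
          calc d i * (a' i).totalDegree ≤ d i * 1 := Nat.mul_le_mul_left _ (ha2 i)
            _ = d i := mul_one _)
    refine le_trans (Finset.sum_le_sum hbound) ?_
    have : (∑ i ∈ d.support, d i) = dg d := rfl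
    rw [this, hsupdeg d hd]
  rw [MvPolynomial.coeff_eq_zero_of_totalDegree_lt
    (lt_of_le_of_lt htd (by exact he)), mul_zero]

lemma coeff_degPart (m : ℕ) (Φ : MvPowerSeries (Fin 2) A) (d : Fin 2 →₀ ℕ) :
    MvPolynomial.coeff d (degPart m Φ) = if dg d = m then MvPowerSeries.coeff d Φ else 0 := by
  rw [degPart, MvPolynomial.coeff_sum]
  split_ifs with hdm
  · rw [Finset.sum_eq_single (d 0)]
    · have hidx : Finsupp.single (0 : Fin 2) (d 0) + Finsupp.single 1 (m - d 0) = d := by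
        have h1 : m - d 0 = d 1 := by
          have := dg_fin2 d; omega
        rw [h1]
        exact (fin2_ext d).symm
      rw [hidx, MvPolynomial.coeff_monomial, if_pos rfl]
    · intro i _ hi
      rw [MvPolynomial.coeff_monomial, if_neg]
      intro h
      apply hi
      have := DFunLike.congr_fun h 0
      simpa [Finsupp.single_apply] using this
    · intro hmem
      exfalso
      apply hmem
      rw [Finset.mem_range]
      have h1 := le_dg 0 d
      have h2 := dg_fin2 d
      omega
  · apply Finset.sum_eq_zero
    intro i hi
    rw [MvPolynomial.coeff_monomial, if_neg]
    intro h
    apply hdm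
    have := congrArg dg h
    rw [dg_add, dg_single, dg_single] at this
    rw [Finset.mem_range] at hi
    omega

lemma degPart_homog (m : ℕ) (Φ : MvPowerSeries (Fin 2) A) :
    (degPart m Φ).IsHomogeneous m := by
  rw [degPart]
  apply MvPolynomial.IsHomogeneous.sum
  intro i hi
  apply MvPolynomial.isHomogeneous_monomial
  rw [← dg_eq_degree, dg_add, dg_single, dg_single]
  rw [Finset.mem_range] at hi
  omega

end L3

section Vec

lemma coe_vec_XX (i j : Fin 3) :
    (fun s => ((![MvPolynomial.X i, MvPolynomial.X j] : Fin 2 → MvPolynomial (Fin 3) A) s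
      : MvPowerSeries (Fin 3) A)) = ![MvPowerSeries.X i, MvPowerSeries.X j] := by
  funext s
  fin_cases s <;>
    simp [Matrix.cons_val_zero, Matrix.cons_val_one, Matrix.head_cons, MvPolynomial.coe_X]

lemma coe_vec_addl (i j k : Fin 3) :
    (fun s => ((![MvPolynomial.X i + MvPolynomial.X j, MvPolynomial.X k]
        : Fin 2 → MvPolynomial (Fin 3) A) s : MvPowerSeries (Fin 3) A))
      = ![MvPowerSeries.X i + MvPowerSeries.X j, MvPowerSeries.X k] := by
  funext s
  fin_cases s <;>
    simp [Matrix.cons_val_zero, Matrix.cons_val_one, Matrix.head_cons,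
      MvPolynomial.coe_add, MvPolynomial.coe_X]

lemma coe_vec_addr (i j k : Fin 3) :
    (fun s => ((![MvPolynomial.X i, MvPolynomial.X j + MvPolynomial.X k]
        : Fin 2 → MvPolynomial (Fin 3) A) s : MvPowerSeries (Fin 3) A))
      = ![MvPowerSeries.X i, MvPowerSeries.X j + MvPowerSeries.X k] := by
  funext s
  fin_cases s <;>
    simp [Matrix.cons_val_zero, Matrix.cons_val_one, Matrix.head_cons,
      MvPolynomial.coe_add, MvPolynomial.coe_X]

lemma ordGe_vec_XX (i j : Fin 3) (s : Fin 2) :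
    ordGe ((![MvPowerSeries.X i, MvPowerSeries.X j] : Fin 2 → MvPowerSeries (Fin 3) A) s) 1 := by
  fin_cases s <;>
    simp only [Matrix.cons_val_zero, Matrix.cons_val_one, Matrix.head_cons] <;>
    exact ordGe_X _

lemma ordGe_vec_addl (i j k : Fin 3) (s : Fin 2) :
    ordGe ((![MvPowerSeries.X i + MvPowerSeries.X j, MvPowerSeries.X k]
      : Fin 2 → MvPowerSeries (Fin 3) A) s) 1 := by
  fin_cases s <;>
    simp only [Matrix.cons_val_zero, Matrix.cons_val_one, Matrix.head_cons]
  · exact (ordGe_X _).add (ordGe_X _)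
  · exact ordGe_X _

lemma ordGe_vec_addr (i j k : Fin 3) (s : Fin 2) :
    ordGe ((![MvPowerSeries.X i, MvPowerSeries.X j + MvPowerSeries.X k]
      : Fin 2 → MvPowerSeries (Fin 3) A) s) 1 := by
  fin_cases s <;>
    simp only [Matrix.cons_val_zero, Matrix.cons_val_one, Matrix.head_cons]
  · exact ordGe_X _
  · exact (ordGe_X _).add (ordGe_X _)

lemma tdeg_vec_XX (i j : Fin 3) (s : Fin 2) :
    ((![MvPolynomial.X i, MvPolynomial.X j] : Fin 2 → MvPolynomial (Fin 3) A) s).totalDegree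
      ≤ 1 := by
  fin_cases s <;>
    simp only [Matrix.cons_val_zero, Matrix.cons_val_one, Matrix.head_cons] <;>
    exact tdeg_X_le _

lemma tdeg_vec_addl (i j k : Fin 3) (s : Fin 2) :
    ((![MvPolynomial.X i + MvPolynomial.X j, MvPolynomial.X k]
      : Fin 2 → MvPolynomial (Fin 3) A) s).totalDegree ≤ 1 := by
  fin_cases s <;>
    simp only [Matrix.cons_val_zero, Matrix.cons_val_one, Matrix.head_cons]
  · exact le_trans (MvPolynomial.totalDegree_add _ _) (max_le (tdeg_X_le _) (tdeg_X_le _))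
  · exact tdeg_X_le _

lemma tdeg_vec_addr (i j k : Fin 3) (s : Fin 2) :
    ((![MvPolynomial.X i, MvPolynomial.X j + MvPolynomial.X k]
      : Fin 2 → MvPolynomial (Fin 3) A) s).totalDegree ≤ 1 := by
  fin_cases s <;>
    simp only [Matrix.cons_val_zero, Matrix.cons_val_one, Matrix.head_cons]
  · exact tdeg_X_le _
  · exact le_trans (MvPolynomial.totalDegree_add _ _) (max_le (tdeg_X_le _) (tdeg_X_le _))

end Vec

section MainKey

lemma coeff_psubst_sub_eq {τ : Type*} (F G : MvPowerSeries (Fin 2) A)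
    (a : Fin 2 → MvPowerSeries τ A) (e : τ →₀ ℕ) :
    MvPowerSeries.coeff e (psubst (F - G) a)
      = MvPowerSeries.coeff e (psubst F a) - MvPowerSeries.coeff e (psubst G a) := by
  rw [psubst_sub, map_sub]

lemma main_key {F G : MvPowerSeries (Fin 2) A} {m : ℕ}
    (huF : ∀ i, MvPowerSeries.coeff (Finsupp.single 0 i) F = if i = 1 then 1 else 0)
    (hvF : ∀ j, MvPowerSeries.coeff (Finsupp.single 1 j) F = if j = 1 then 1 else 0)
    (huG : ∀ i, MvPowerSeries.coeff (Finsupp.single 0 i) G = if i = 1 then 1 else 0)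
    (hvG : ∀ j, MvPowerSeries.coeff (Finsupp.single 1 j) G = if j = 1 then 1 else 0)
    (hordΔ : ordGe (F - G) m)
    (hassocF : psubst F ![psubst F ![MvPowerSeries.X 0, MvPowerSeries.X 1], MvPowerSeries.X 2]
      = psubst F ![MvPowerSeries.X 0,
          psubst F ![MvPowerSeries.X 1, MvPowerSeries.X (2 : Fin 3)]])
    (hassocG : psubst G ![psubst G ![MvPowerSeries.X 0, MvPowerSeries.X 1], MvPowerSeries.X 2]
      = psubst G ![MvPowerSeries.X 0,
          psubst G ![MvPowerSeries.X 1, MvPowerSeries.X (2 : Fin 3)]])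
    {e : Fin 3 →₀ ℕ} (he : dg e ≤ m) :
    MvPowerSeries.coeff e
        (psubst (F - G) ![MvPowerSeries.X 0 + MvPowerSeries.X 1, MvPowerSeries.X 2])
      + MvPowerSeries.coeff e (psubst (F - G) ![MvPowerSeries.X 0, MvPowerSeries.X 1])
    = MvPowerSeries.coeff e
        (psubst (F - G) ![MvPowerSeries.X 0, MvPowerSeries.X 1 + MvPowerSeries.X 2])
      + MvPowerSeries.coeff e (psubst (F - G) ![MvPowerSeries.X 1, MvPowerSeries.X 2]) := by
  have hSF1 : ordGe (psubst F ![MvPowerSeries.X (0 : Fin 3), MvPowerSeries.X 1]) 1 :=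
    ordGe_psubst_XX_one huF hvF (by decide)
  have hSG1 : ordGe (psubst G ![MvPowerSeries.X (0 : Fin 3), MvPowerSeries.X 1]) 1 :=
    ordGe_psubst_XX_one huG hvG (by decide)
  have hTF1 : ordGe (psubst F ![MvPowerSeries.X (1 : Fin 3), MvPowerSeries.X 2]) 1 :=
    ordGe_psubst_XX_one huF hvF (by decide)
  have hTG1 : ordGe (psubst G ![MvPowerSeries.X (1 : Fin 3), MvPowerSeries.X 2]) 1 :=
    ordGe_psubst_XX_one huG hvG (by decide)
  have hSFlin := lin_part huF hvF (show (0 : Fin 3) ≠ 1 by decide)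
  have hTFlin := lin_part huF hvF (show (1 : Fin 3) ≠ 2 by decide)
  have hSFSG : ordGe (psubst F ![MvPowerSeries.X (0 : Fin 3), MvPowerSeries.X 1]
      - psubst G ![MvPowerSeries.X (0 : Fin 3), MvPowerSeries.X 1]) m := by
    rw [← psubst_sub]
    exact ordGe_psubst hordΔ (ordGe_vec_XX 0 1)
  have hTFTG : ordGe (psubst F ![MvPowerSeries.X (1 : Fin 3), MvPowerSeries.X 2]
      - psubst G ![MvPowerSeries.X (1 : Fin 3), MvPowerSeries.X 2]) m := by
    rw [← psubst_sub]
    exact ordGe_psubst hordΔ (ordGe_vec_XX 1 2)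
  have h1 := congrArg (MvPowerSeries.coeff e) hassocF
  have h2 := congrArg (MvPowerSeries.coeff e) hassocG
  have hLa : MvPowerSeries.coeff e (psubst (F - G)
        ![psubst F ![MvPowerSeries.X 0, MvPowerSeries.X 1], MvPowerSeries.X 2])
      = MvPowerSeries.coeff e
        (psubst (F - G) ![MvPowerSeries.X 0 + MvPowerSeries.X 1, MvPowerSeries.X 2]) := by
    refine coeff_psubst_congr_args hordΔ ?_ (ordGe_vec_addl 0 1 2) ?_ he
    · intro s
      fin_cases s
      · exact hSF1
      · exact ordGe_X 2
    · intro s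
      fin_cases s
      · exact hSFlin
      · show ordGe (MvPowerSeries.X 2 - MvPowerSeries.X 2 : MvPowerSeries (Fin 3) A) 2
        rw [sub_self]
        exact ordGe_zero 2
  have hRa : MvPowerSeries.coeff e (psubst (F - G)
        ![MvPowerSeries.X 0, psubst F ![MvPowerSeries.X 1, MvPowerSeries.X 2]])
      = MvPowerSeries.coeff e
        (psubst (F - G) ![MvPowerSeries.X 0, MvPowerSeries.X 1 + MvPowerSeries.X 2]) := by
    refine coeff_psubst_congr_args hordΔ ?_ (ordGe_vec_addr 0 1 2) ?_ he
    · intro s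
      fin_cases s
      · exact ordGe_X 0
      · exact hTF1
    · intro s
      fin_cases s
      · show ordGe (MvPowerSeries.X 0 - MvPowerSeries.X 0 : MvPowerSeries (Fin 3) A) 2
        rw [sub_self]
        exact ordGe_zero 2
      · exact hTFlin
  have hLb : MvPowerSeries.coeff e (psubst G
        ![psubst F ![MvPowerSeries.X 0, MvPowerSeries.X 1], MvPowerSeries.X 2])
      - MvPowerSeries.coeff e (psubst G
        ![psubst G ![MvPowerSeries.X 0, MvPowerSeries.X 1], MvPowerSeries.X 2])
      = MvPowerSeries.coeff e
          (psubst (F - G) ![MvPowerSeries.X 0, MvPowerSeries.X 1]) := by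
    rw [key_L2_left huG hSF1 hSG1 (ordGe_X 2) hSFSG he, psubst_sub, map_sub]
  have hRb : MvPowerSeries.coeff e (psubst G
        ![MvPowerSeries.X 0, psubst F ![MvPowerSeries.X 1, MvPowerSeries.X 2]])
      - MvPowerSeries.coeff e (psubst G
        ![MvPowerSeries.X 0, psubst G ![MvPowerSeries.X 1, MvPowerSeries.X 2]])
      = MvPowerSeries.coeff e
          (psubst (F - G) ![MvPowerSeries.X 1, MvPowerSeries.X 2]) := by
    rw [key_L2_right hvG hTF1 hTG1 (ordGe_X 0) hTFTG he, psubst_sub, map_sub]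
  rw [← hLa, ← hLb, ← hRa, ← hRb, coeff_psubst_sub_eq, coeff_psubst_sub_eq]
  linear_combination h1 - h2

end MainKey

end

theorem statement8 (A : Type*) [CommRing A] (F G : MvPowerSeries (Fin 2) A)
    (hF : IsFormalGroupLaw F) (hG : IsFormalGroupLaw G) (m : ℕ) (hm : 2 ≤ m)
    (hFG : ∀ d : Fin 2 →₀ ℕ, d 0 + d 1 < m →
      MvPowerSeries.coeff d F = MvPowerSeries.coeff d G) :
    (degPart m (F - G)).IsHomogeneous m ∧ IsSymmCocycle (degPart m (F - G)) := by
  classical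
  have huF : ∀ i, MvPowerSeries.coeff (Finsupp.single 0 i) F = if i = 1 then 1 else 0 :=
    hu_extract hF.id_left
  have hvF : ∀ j, MvPowerSeries.coeff (Finsupp.single 1 j) F = if j = 1 then 1 else 0 :=
    hv_extract hF.id_right
  have huG : ∀ i, MvPowerSeries.coeff (Finsupp.single 0 i) G = if i = 1 then 1 else 0 :=
    hu_extract hG.id_left
  have hvG : ∀ j, MvPowerSeries.coeff (Finsupp.single 1 j) G = if j = 1 then 1 else 0 :=
    hv_extract hG.id_right
  have hordΔ : ordGe (F - G) m := by
    intro d hd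
    rw [dg_fin2] at hd
    rw [map_sub, hFG d hd, sub_self]
  have hP : ∀ d, MvPolynomial.coeff d (degPart m (F - G))
      = if dg d = m then MvPowerSeries.coeff d (F - G) else 0 := coeff_degPart m (F - G)
  have hsupdeg : ∀ d ∈ (degPart m (F - G)).support, dg d = m := by
    intro d hd
    by_contra hne
    have h := hP d
    rw [if_neg hne] at h
    exact (MvPolynomial.mem_support_iff.mp hd) h
  refine ⟨degPart_homog m (F - G), ?_, ?_⟩
  · -- symmetry
    have hsym : ∀ d : Fin 2 →₀ ℕ,
        MvPowerSeries.coeff (Finsupp.single 0 (d 1) + Finsupp.single 1 (d 0)) (F - G)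
          = MvPowerSeries.coeff d (F - G) := by
      intro d
      rw [map_sub, map_sub, coeff_comm_extract hF.comm d, coeff_comm_extract hG.comm d]
    refine MvPolynomial.ext _ _ fun d => ?_
    have hcomp : (Equiv.swap (0 : Fin 2) 1) ∘ (Equiv.swap (0 : Fin 2) 1) = id := by
      funext x; simp
    have hswap : Finsupp.mapDomain (Equiv.swap (0 : Fin 2) 1)
        (Finsupp.mapDomain (Equiv.swap (0 : Fin 2) 1) d) = d := by
      rw [← Finsupp.mapDomain_comp, hcomp, Finsupp.mapDomain_id]
    have hd' : Finsupp.mapDomain (Equiv.swap (0 : Fin 2) 1) d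
        = Finsupp.single 0 (d 1) + Finsupp.single 1 (d 0) := by
      conv_lhs => rw [fin2_ext d]
      rw [Finsupp.mapDomain_add, Finsupp.mapDomain_single, Finsupp.mapDomain_single,
        Equiv.swap_apply_left, Equiv.swap_apply_right, add_comm]
    calc MvPolynomial.coeff d (MvPolynomial.rename (Equiv.swap (0 : Fin 2) 1)
            (degPart m (F - G)))
        = MvPolynomial.coeff (Finsupp.mapDomain (Equiv.swap (0 : Fin 2) 1)
            (Finsupp.mapDomain (Equiv.swap (0 : Fin 2) 1) d))
            (MvPolynomial.rename (Equiv.swap (0 : Fin 2) 1) (degPart m (F - G))) := by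
          rw [hswap]
      _ = MvPolynomial.coeff (Finsupp.mapDomain (Equiv.swap (0 : Fin 2) 1) d)
            (degPart m (F - G)) :=
          MvPolynomial.coeff_rename_mapDomain _ (Equiv.injective _) _ _
      _ = MvPolynomial.coeff d (degPart m (F - G)) := by
          rw [hd', hP, hP]
          have hdg1 : dg (Finsupp.single (0 : Fin 2) (d 1) + Finsupp.single 1 (d 0))
              = d 1 + d 0 := by rw [dg_add, dg_single, dg_single]
          rw [hdg1, dg_fin2 d]
          by_cases hmm : d 0 + d 1 = m
          · rw [if_pos (by omega), if_pos hmm]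
            exact hsym d
          · rw [if_neg (by omega), if_neg hmm]
  · -- cocycle
    refine MvPolynomial.ext _ _ fun e => ?_
    rw [MvPolynomial.coeff_sub, MvPolynomial.coeff_add, MvPolynomial.coeff_sub,
      MvPolynomial.coeff_zero]
    rcases le_or_gt (dg e) m with he | he
    · have c1 := coeff_psubst_eq_aeval hordΔ hP ![MvPolynomial.X 1, MvPolynomial.X 2]
        (fun s => by rw [congrFun (coe_vec_XX 1 2) s]; exact ordGe_vec_XX 1 2 s) he
      have c2 := coeff_psubst_eq_aeval hordΔ hP ![MvPolynomial.X 0 + MvPolynomial.X 1,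
          MvPolynomial.X 2]
        (fun s => by rw [congrFun (coe_vec_addl 0 1 2) s]; exact ordGe_vec_addl 0 1 2 s) he
      have c3 := coeff_psubst_eq_aeval hordΔ hP ![MvPolynomial.X 0,
          MvPolynomial.X 1 + MvPolynomial.X 2]
        (fun s => by rw [congrFun (coe_vec_addr 0 1 2) s]; exact ordGe_vec_addr 0 1 2 s) he
      have c4 := coeff_psubst_eq_aeval hordΔ hP ![MvPolynomial.X 0, MvPolynomial.X 1]
        (fun s => by rw [congrFun (coe_vec_XX 0 1) s]; exact ordGe_vec_XX 0 1 s) he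
      rw [coe_vec_XX] at c1 c4
      rw [coe_vec_addl] at c2
      rw [coe_vec_addr] at c3
      rw [← c1, ← c2, ← c3, ← c4]
      linear_combination -main_key huF hvF huG hvG hordΔ hF.assoc hG.assoc he
    · rw [coeff_aeval_high hsupdeg _ (tdeg_vec_XX 1 2) he,
        coeff_aeval_high hsupdeg _ (tdeg_vec_addl 0 1 2) he,
        coeff_aeval_high hsupdeg _ (tdeg_vec_addr 0 1 2) he,
        coeff_aeval_high hsupdeg _ (tdeg_vec_XX 0 1) he]
      ring
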